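/- Fix θ > 0 and t > 0, set b_t = θ(1+√t)², and let f_t be the equilibrium density of the measure μ^t. Then lim_{ε→0⁺} ∫_ℝ f_t(x)/(b_t + ε − x) dx = θ^{−1}·log(1 + t^{−1/2}); i.e. the Stieltjes transform G_{μ^t}(z) = ∫ (z−x)^{−1} dμ^t(x) satisfies lim_{ε→0⁺} G_{μ^t}(b_t + ε) = θ^{−1}·log(1 + t^{−1/2}). -/

import Mathlib

open Filter MeasureTheory

attribute [local instance] Classical.propDecidable

noncomputable section

section AuxK
open Real

def Kint (s φ : ℝ) : ℝ :=
  Real.arctan (s * Real.sin φ / (1 + s * Real.cos φ)) * ((1 + Real.cos φ) / Real.sin φ)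

def Kfun (s : ℝ) : ℝ := ∫ φ in (0:ℝ)..Real.pi, Kint s φ

lemma measurable_Kint (s : ℝ) : Measurable (Kint s) := by
  unfold Kint
  exact (Real.measurable_arctan.comp ((measurable_const.mul Real.measurable_sin).div
    (measurable_const.add (measurable_const.mul Real.measurable_cos)))).mul
    ((measurable_const.add Real.measurable_cos).div Real.measurable_sin)

lemma my_arctan_nonneg {x : ℝ} (hx : 0 ≤ x) : 0 ≤ Real.arctan x := by
  have := Real.arctan_strictMono.monotone hx
  simpa using this

lemma arctan_le_self {x : ℝ} (hx : 0 ≤ x) : Real.arctan x ≤ x := by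
  have h := Real.le_tan (my_arctan_nonneg hx) (Real.arctan_lt_pi_div_two x)
  rwa [Real.tan_arctan] at h

lemma Kint_nonneg {s φ : ℝ} (hs0 : 0 ≤ s) (hs1 : s ≤ 1) (hφ : φ ∈ Set.Ioo 0 Real.pi) :
    0 ≤ Kint s φ := by
  obtain ⟨h0, h1⟩ := hφ
  have hsin : 0 < Real.sin φ := Real.sin_pos_of_pos_of_lt_pi h0 h1
  have hcos1 : Real.cos φ ≤ 1 := Real.cos_le_one φ
  have hcos2 : -1 ≤ Real.cos φ := Real.neg_one_le_cos φ
  have hM : 0 ≤ 1 + s * Real.cos φ := by nlinarith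
  have h2 : 0 ≤ s * Real.sin φ / (1 + s * Real.cos φ) :=
    div_nonneg (by positivity) hM
  have h3 : 0 ≤ (1 + Real.cos φ) / Real.sin φ := by
    apply div_nonneg (by linarith) hsin.le
  exact mul_nonneg (my_arctan_nonneg h2) h3

lemma Kint_le_two {s φ : ℝ} (hs0 : 0 ≤ s) (hs1 : s ≤ 1) (hφ : φ ∈ Set.Ioo 0 Real.pi) :
    Kint s φ ≤ 2 := by
  obtain ⟨h0, h1⟩ := hφ
  have hsin : 0 < Real.sin φ := Real.sin_pos_of_pos_of_lt_pi h0 h1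
  have hcos1 : Real.cos φ < 1 := by
    have := Real.strictAntiOn_cos (Set.left_mem_Icc.2 Real.pi_pos.le)
      ⟨h0.le, h1.le⟩ h0
    simpa using this
  have hcos2 : -1 < Real.cos φ := by
    have := Real.strictAntiOn_cos ⟨h0.le, h1.le⟩ (Set.right_mem_Icc.2 Real.pi_pos.le) h1
    simpa using this
  have hM : 0 < 1 + s * Real.cos φ := by nlinarith
  have harg : 0 ≤ s * Real.sin φ / (1 + s * Real.cos φ) :=
    div_nonneg (by positivity) hM.le
  have h2 : Real.arctan (s * Real.sin φ / (1 + s * Real.cos φ))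
      ≤ s * Real.sin φ / (1 + s * Real.cos φ) := arctan_le_self harg
  have h3 : 0 ≤ (1 + Real.cos φ) / Real.sin φ := div_nonneg (by linarith) hsin.le
  calc Kint s φ ≤ (s * Real.sin φ / (1 + s * Real.cos φ)) * ((1 + Real.cos φ) / Real.sin φ) :=
        mul_le_mul_of_nonneg_right h2 h3
    _ = s * (1 + Real.cos φ) / (1 + s * Real.cos φ) := by
        field_simp
    _ ≤ 2 := by
        rw [div_le_iff₀ hM]
        nlinarith

lemma integrableOn_Kint {s : ℝ} (hs0 : 0 ≤ s) (hs1 : s ≤ 1) :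
    IntegrableOn (Kint s) (Set.Ioo 0 Real.pi) := by
  refine Integrable.mono' (integrable_const 2) ((measurable_Kint s).aestronglyMeasurable) ?_
  rw [ae_restrict_iff' measurableSet_Ioo]
  refine Filter.Eventually.of_forall (fun φ hφ => ?_)
  rw [Real.norm_eq_abs, abs_le]
  exact ⟨by linarith [Kint_nonneg hs0 hs1 hφ], Kint_le_two hs0 hs1 hφ⟩
lemma integral_inner_K {s : ℝ} (hs : s ∈ Set.Ioo (-1:ℝ) 1) :
    ∫ φ in (0:ℝ)..Real.pi, (1 + Real.cos φ) / (1 + 2*s*Real.cos φ + s^2) = Real.pi / (1+s) := by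
  obtain ⟨hs1, hs2⟩ := hs
  have habs : |s| < 1 := abs_lt.2 ⟨hs1, hs2⟩
  have hM : ∀ φ : ℝ, 0 < 1 + s * Real.cos φ := by
    intro φ
    have h1 : |s * Real.cos φ| ≤ |s| := by
      rw [abs_mul]
      calc |s| * |Real.cos φ| ≤ |s| * 1 := by
            exact mul_le_mul_of_nonneg_left (Real.abs_cos_le_one φ) (abs_nonneg s)
        _ = |s| := mul_one _
    have := neg_abs_le (s * Real.cos φ)
    have := abs_le.1 h1
    linarith [this.1]
  have hD : ∀ φ : ℝ, 0 < 1 + 2*s*Real.cos φ + s^2 := by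
    intro φ
    have h1 : |Real.cos φ| ≤ 1 := Real.abs_cos_le_one φ
    have h2 := abs_le.1 h1
    nlinarith [sq_nonneg (s + Real.cos φ), sq_nonneg (1 - |s|), abs_nonneg s, sq_abs s,
      neg_abs_le s, le_abs_self s]
  have hcont : Continuous fun φ : ℝ => (1 + Real.cos φ) / (1 + 2*s*Real.cos φ + s^2) := by
    apply Continuous.div (by continuity) (by continuity)
    intro φ; exact (hD φ).ne'
  rcases eq_or_ne s 0 with rfl | hs0
  · have hzz : ∀ φ:ℝ, (1 + Real.cos φ) / (1 + 2*0*Real.cos φ + 0^2) = 1 + Real.cos φ := by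
      intro φ; norm_num
    rw [intervalIntegral.integral_congr (g := fun φ => 1 + Real.cos φ) (fun φ _ => hzz φ)]
    rw [intervalIntegral.integral_add intervalIntegrable_const (intervalIntegral.intervalIntegrable_cos)]
    simp
  · -- antiderivative
    set W : ℝ → ℝ := fun φ => φ/(1+s) +
      ((1-s)/(s*(1+s))) * Real.arctan (s * Real.sin φ / (1 + s * Real.cos φ)) with hW
    have hderiv : ∀ φ ∈ Set.uIcc (0:ℝ) Real.pi,
        HasDerivAt W ((1 + Real.cos φ) / (1 + 2*s*Real.cos φ + s^2)) φ := by
      intro φ _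
      have hMφ := hM φ
      have hDφ := hD φ
      have h1 : HasDerivAt (fun x : ℝ => s * Real.sin x) (s * Real.cos φ) φ :=
        (Real.hasDerivAt_sin φ).const_mul s
      have h2 : HasDerivAt (fun x : ℝ => 1 + s * Real.cos x) (s * (-Real.sin φ)) φ :=
        ((Real.hasDerivAt_cos φ).const_mul s).const_add 1
      have h3 := (h1.div h2 hMφ.ne').arctan
      have e1 : 1 + (s * Real.sin φ / (1 + s * Real.cos φ))^2
          = (1 + 2*s*Real.cos φ + s^2) / (1 + s*Real.cos φ)^2 := by
        field_simp
        linear_combination s^2 * Real.sin_sq_add_cos_sq φ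
      have e2 : s * Real.cos φ * (1 + s * Real.cos φ) - s * Real.sin φ * (s * -Real.sin φ)
          = s * (s + Real.cos φ) := by linear_combination s^2 * Real.sin_sq_add_cos_sq φ
      have hV : HasDerivAt (fun x => Real.arctan (s * Real.sin x / (1 + s * Real.cos x)))
          (s * (s + Real.cos φ) / (1 + 2*s*Real.cos φ + s^2)) φ := by
        convert h3 using 1
        · rfl
        simp only [Pi.div_apply]
        rw [e2, e1]
        field_simp
      have h4 : HasDerivAt (fun x : ℝ => x/(1+s)) (1/(1+s)) φ := by
        simpa using (hasDerivAt_id φ).div_const (1+s)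
      have h5 := h4.add (hV.const_mul ((1-s)/(s*(1+s))))
      refine h5.congr_deriv ?_
      have h1s : (1:ℝ) + s ≠ 0 := by linarith
      generalize hDD : 1 + 2 * s * Real.cos φ + s ^ 2 = D at hDφ ⊢
      have hD0 : D ≠ 0 := hDφ.ne'
      field_simp
      rw [← hDD]
      ring
    have hint : IntervalIntegrable
        (fun φ => (1 + Real.cos φ) / (1 + 2*s*Real.cos φ + s^2)) volume 0 Real.pi :=
      hcont.intervalIntegrable 0 Real.pi
    have := intervalIntegral.integral_eq_sub_of_hasDerivAt hderiv hint
    rw [this]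
    simp [W, Real.sin_pi, Real.sin_zero]

lemma intervalIntegrable_of_Ioo {f : ℝ → ℝ} (h : IntegrableOn f (Set.Ioo 0 Real.pi)) :
    IntervalIntegrable f volume 0 Real.pi := by
  rw [intervalIntegrable_iff, Set.uIoc_of_le Real.pi_pos.le]
  exact h.congr_set_ae MeasureTheory.Ioo_ae_eq_Ioc.symm

lemma hasDerivAt_Kfun {s₀ : ℝ} (h0 : 0 ≤ s₀) (h1 : s₀ < 1) :
    HasDerivAt Kfun (Real.pi / (1 + s₀)) s₀ := by
  set ε := (1 - s₀)/2 with hεdef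
  have hε_pos : 0 < ε := by rw [hεdef]; linarith
  set ρ := (1 + s₀)/2 with hρdef
  have hρ1 : ρ < 1 := by rw [hρdef]; linarith
  have hρ0 : 0 ≤ ρ := by rw [hρdef]; linarith
  have hball : ∀ x ∈ Metric.ball s₀ ε, |x| ≤ ρ := by
    intro x hx
    rw [Metric.mem_ball, Real.dist_eq] at hx
    have := abs_lt.1 hx
    rw [abs_le]
    constructor <;> [skip; skip] <;> rw [hρdef] <;> rw [hεdef] at this <;>
      [linarith [this.1]; linarith [this.2]]
  have hMx : ∀ (x φ : ℝ), |x| ≤ ρ → 0 < 1 + x * Real.cos φ := by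
    intro x φ hx
    have h1 : |x * Real.cos φ| ≤ |x| := by
      rw [abs_mul]
      calc |x| * |Real.cos φ| ≤ |x| * 1 :=
            mul_le_mul_of_nonneg_left (Real.abs_cos_le_one φ) (abs_nonneg x)
        _ = |x| := mul_one _
    have h2 := abs_le.1 h1
    linarith [h2.1]
  have hDx : ∀ (x φ : ℝ), |x| ≤ ρ → (1-ρ)^2 ≤ 1 + 2*x*Real.cos φ + x^2 := by
    intro x φ hx
    have h1 : |x * Real.cos φ| ≤ |x| := by
      rw [abs_mul]
      calc |x| * |Real.cos φ| ≤ |x| * 1 :=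
            mul_le_mul_of_nonneg_left (Real.abs_cos_le_one φ) (abs_nonneg x)
        _ = |x| := mul_one _
    have h2 := abs_le.1 h1
    have h3 := sq_abs x
    nlinarith [mul_nonneg (sub_nonneg.2 hx) (by linarith : (0:ℝ) ≤ 2 - |x| - ρ)]
  have key := (intervalIntegral.hasDerivAt_integral_of_dominated_loc_of_deriv_le
    (F := fun s φ => Kint s φ)
    (F' := fun x φ => (1 + Real.cos φ) / (1 + 2*x*Real.cos φ + x^2))
    (bound := fun _ => 2/(1-ρ)^2) (a := 0) (b := Real.pi) (μ := volume)
    (Metric.ball_mem_nhds s₀ hε_pos)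
    (Filter.Eventually.of_forall fun s => (measurable_Kint s).aestronglyMeasurable)
    (intervalIntegrable_of_Ioo (integrableOn_Kint h0 h1.le))
    ?_ ?_ (intervalIntegrable_const) ?_).2
  · have hmem : s₀ ∈ Set.Ioo (-1:ℝ) 1 := ⟨by linarith, h1⟩
    rw [integral_inner_K hmem] at key
    unfold Kfun
    exact key
  · -- measurability of F' s₀
    have hcont : Continuous fun φ => (1 + Real.cos φ) / (1 + 2*s₀*Real.cos φ + s₀^2) := by
      apply Continuous.div (by continuity) (by continuity)
      intro φ
      have := hDx s₀ φ (by rw [abs_le]; constructor <;> rw [hρdef] <;> linarith)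
      nlinarith [sq_nonneg (1-ρ)]
    exact hcont.aestronglyMeasurable
  · -- bound
    refine Filter.Eventually.of_forall fun φ => fun _ x hx => ?_
    have hxρ := hball x hx
    have hD := hDx x φ hxρ
    have hDpos : 0 < 1 + 2*x*Real.cos φ + x^2 := by nlinarith [sq_nonneg (1-ρ)]
    have hnum0 : (0:ℝ) ≤ 1 + Real.cos φ := by linarith [Real.neg_one_le_cos φ]
    have hnum2 : 1 + Real.cos φ ≤ 2 := by linarith [Real.cos_le_one φ]
    rw [Real.norm_eq_abs, abs_of_nonneg (div_nonneg hnum0 hDpos.le)]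
    exact div_le_div₀ (by norm_num) hnum2 (pow_pos (by linarith) 2) hD
  · -- differentiability in s
    refine Filter.Eventually.of_forall fun φ => fun hφ x hx => ?_
    rw [Set.uIoc_of_le Real.pi_pos.le] at hφ
    have hxρ := hball x hx
    rcases eq_or_lt_of_le hφ.2 with hπ | hπ
    · -- φ = π
      subst hπ
      have hz : (fun s => Kint s Real.pi) = fun _ => (0:ℝ) := by
        funext u
        simp [Kint]
      rw [hz]
      simpa using hasDerivAt_const x (0:ℝ)
    · have hφ0 := hφ.1
      have hsin : 0 < Real.sin φ := Real.sin_pos_of_pos_of_lt_pi hφ0 hπ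
      have hM : 0 < 1 + x * Real.cos φ := hMx x φ hxρ
      have hD : 0 < 1 + 2*x*Real.cos φ + x^2 := by
        have := hDx x φ hxρ
        nlinarith [sq_nonneg (1-ρ)]
      have ha1 : HasDerivAt (fun s : ℝ => s * Real.sin φ) (Real.sin φ) x :=
        hasDerivAt_mul_const (Real.sin φ)
      have ha2 : HasDerivAt (fun s : ℝ => 1 + s * Real.cos φ) (Real.cos φ) x :=
        (hasDerivAt_mul_const (Real.cos φ)).const_add 1
      have ha3 := ((ha1.div ha2 hM.ne').arctan).mul_const ((1 + Real.cos φ) / Real.sin φ)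
      have hKi : (fun s => Kint s φ)
          = fun s => Real.arctan (s * Real.sin φ / (1 + s * Real.cos φ))
              * ((1 + Real.cos φ) / Real.sin φ) := rfl
      rw [hKi]
      convert ha3 using 1
      · rfl
      · rfl
      have e1 : 1 + (x * Real.sin φ / (1 + x * Real.cos φ))^2
          = (1 + 2*x*Real.cos φ + x^2) / (1 + x*Real.cos φ)^2 := by
        field_simp
        linear_combination x^2 * Real.sin_sq_add_cos_sq φ
      have e2 : Real.sin φ * (1 + x * Real.cos φ) - x * Real.sin φ * Real.cos φ
          = Real.sin φ := by ring
      simp only [Pi.div_apply]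
      rw [e2, e1]
      generalize 1 + 2 * x * Real.cos φ + x ^ 2 = D at hD ⊢
      generalize 1 + x * Real.cos φ = M at hM ⊢
      have hD0 : D ≠ 0 := hD.ne'
      have hM0 : M ≠ 0 := hM.ne'
      field_simp

lemma Kfun_zero : Kfun 0 = 0 := by
  unfold Kfun
  simp [Kint]

lemma Kfun_eq_of_lt {r : ℝ} (h0 : 0 ≤ r) (h1 : r < 1) :
    Kfun r = Real.pi * Real.log (1 + r) := by
  have hderiv : ∀ u ∈ Set.uIcc (0:ℝ) r, HasDerivAt Kfun (Real.pi/(1+u)) u := by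
    intro u hu
    rw [Set.uIcc_of_le h0] at hu
    exact hasDerivAt_Kfun hu.1 (lt_of_le_of_lt hu.2 h1)
  have hint : IntervalIntegrable (fun u => Real.pi/(1+u)) volume 0 r := by
    apply ContinuousOn.intervalIntegrable
    apply ContinuousOn.div continuousOn_const (by fun_prop)
    intro u hu
    rw [Set.uIcc_of_le h0] at hu
    have : (0:ℝ) < 1 + u := by linarith [hu.1]
    exact this.ne'
  have hFTC := intervalIntegral.integral_eq_sub_of_hasDerivAt hderiv hint
  have hval : ∫ u in (0:ℝ)..r, Real.pi/(1+u) = Real.pi * Real.log (1 + r) := by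
    have hrw : (fun u : ℝ => Real.pi/(1+u)) = fun u : ℝ => Real.pi * (fun v : ℝ => v⁻¹) (u + 1) := by
      funext u
      rw [div_eq_mul_inv, add_comm]
    rw [hrw]
    rw [intervalIntegral.integral_const_mul]
    rw [intervalIntegral.integral_comp_add_right (fun v : ℝ => v⁻¹) 1]
    rw [integral_inv]
    · rw [zero_add]
      congr 1
      rw [div_one]
      ring_nf
    · rw [zero_add, Set.uIcc_of_le (by linarith)]
      rintro ⟨hc1, hc2⟩
      linarith
  rw [hFTC, Kfun_zero, sub_zero] at hval
  exact hval

lemma Kfun_one : Kfun 1 = Real.pi * Real.log 2 := by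
  have h1 : Tendsto Kfun (nhdsWithin (1:ℝ) (Set.Iio 1)) (nhds (Real.pi * Real.log 2)) := by
    have hev : ∀ᶠ s in nhdsWithin (1:ℝ) (Set.Iio 1), Real.pi * Real.log (1+s) = Kfun s := by
      filter_upwards [Ioo_mem_nhdsLT_of_mem (Set.right_mem_Ioc.2 (by norm_num : (0:ℝ) < 1))]
        with s hs
      exact (Kfun_eq_of_lt hs.1.le hs.2).symm
    have hcont : Tendsto (fun s : ℝ => Real.pi * Real.log (1+s))
        (nhdsWithin (1:ℝ) (Set.Iio 1)) (nhds (Real.pi * Real.log 2)) := by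
      have hca : ContinuousAt (fun s : ℝ => Real.pi * Real.log (1+s)) 1 := by
        apply ContinuousAt.mul continuousAt_const
        have h2 : ContinuousAt Real.log ((fun s : ℝ => 1 + s) 1) :=
          Real.continuousAt_log (by norm_num)
        exact h2.comp (by fun_prop)
      have := hca.tendsto.mono_left (nhdsWithin_le_nhds (s := Set.Iio (1:ℝ)))
      norm_num at this
      exact this
    exact Filter.Tendsto.congr' hev hcont
  have h2 : Tendsto Kfun (nhdsWithin (1:ℝ) (Set.Iio 1)) (nhds (Kfun 1)) := by
    unfold Kfun
    apply intervalIntegral.tendsto_integral_filter_of_dominated_convergence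
      (bound := fun _ => (2:ℝ))
    · exact Filter.Eventually.of_forall fun s => (measurable_Kint s).aestronglyMeasurable
    · filter_upwards [Ioo_mem_nhdsLT_of_mem (Set.right_mem_Ioc.2 (by norm_num : (0:ℝ) < 1))]
        with s hs
      refine Filter.Eventually.of_forall fun φ hφ => ?_
      rw [Set.uIoc_of_le Real.pi_pos.le] at hφ
      rcases eq_or_lt_of_le hφ.2 with hπ | hπ
      · subst hπ
        simp [Kint]
      · have hm : φ ∈ Set.Ioo 0 Real.pi := ⟨hφ.1, hπ⟩
        rw [Real.norm_eq_abs, abs_of_nonneg (Kint_nonneg hs.1.le hs.2.le hm)]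
        exact Kint_le_two hs.1.le hs.2.le hm
    · exact intervalIntegrable_const
    · refine Filter.Eventually.of_forall fun φ hφ => ?_
      rw [Set.uIoc_of_le Real.pi_pos.le] at hφ
      rcases eq_or_lt_of_le hφ.2 with hπ | hπ
      · subst hπ
        have hz : ∀ s : ℝ, Kint s Real.pi = 0 := by
          intro s; simp [Kint]
        simp only [hz]
        exact tendsto_const_nhds
      · have hsin : 0 < Real.sin φ := Real.sin_pos_of_pos_of_lt_pi hφ.1 hπ
        have hcos : -1 < Real.cos φ := by
          have := Real.strictAntiOn_cos ⟨hφ.1.le, hπ.le⟩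
            (Set.right_mem_Icc.2 Real.pi_pos.le) hπ
          simpa using this
        have hM : (0:ℝ) < 1 + 1 * Real.cos φ := by linarith
        have hca : ContinuousAt (fun s : ℝ => Kint s φ) 1 := by
          unfold Kint
          apply ContinuousAt.mul
          · apply Real.continuous_arctan.continuousAt.comp
            refine ContinuousAt.div ?_ ?_ ?_
            · fun_prop
            · fun_prop
            · simpa using hM.ne'
          · exact continuousAt_const
        exact hca.tendsto.mono_left nhdsWithin_le_nhds
  exact tendsto_nhds_unique h2 h1

lemma Kfun_eq {r : ℝ} (h0 : 0 ≤ r) (h1 : r ≤ 1) : Kfun r = Real.pi * Real.log (1 + r) := by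
  rcases eq_or_lt_of_le h1 with rfl | h1'
  · rw [Kfun_one]
    norm_num
  · exact Kfun_eq_of_lt h0 h1'


lemma sin_pos_Ioo {φ : ℝ} (hφ : φ ∈ Set.Ioo 0 Real.pi) : 0 < Real.sin φ :=
  Real.sin_pos_of_pos_of_lt_pi hφ.1 hφ.2

lemma cos_lt_one_Ioo {φ : ℝ} (hφ : φ ∈ Set.Ioo 0 Real.pi) : Real.cos φ < 1 := by
  have := Real.strictAntiOn_cos (Set.left_mem_Icc.2 Real.pi_pos.le) ⟨hφ.1.le, hφ.2.le⟩ hφ.1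
  simpa using this

lemma neg_one_lt_cos_Ioo {φ : ℝ} (hφ : φ ∈ Set.Ioo 0 Real.pi) : -1 < Real.cos φ := by
  have := Real.strictAntiOn_cos ⟨hφ.1.le, hφ.2.le⟩ (Set.right_mem_Icc.2 Real.pi_pos.le) hφ.2
  simpa using this

lemma arctan_id1 {c φ : ℝ} (hc : 1 ≤ c) (hφ : φ ∈ Set.Ioo 0 Real.pi) :
    Real.pi/2 - Real.arctan ((c + Real.cos φ)/Real.sin φ)
      = Real.arctan (1/c * Real.sin φ / (1 + 1/c * Real.cos φ)) := by
  have hsin := sin_pos_Ioo hφ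
  have hcos := neg_one_lt_cos_Ioo hφ
  have hc0 : 0 < c := lt_of_lt_of_le one_pos hc
  have hX : 0 < c + Real.cos φ := by linarith
  have hden : (0:ℝ) < 1 + 1/c * Real.cos φ := by
    have : 1 + 1/c * Real.cos φ = (c + Real.cos φ)/c := by field_simp
    rw [this]
    positivity
  have harg : 1/c * Real.sin φ / (1 + 1/c * Real.cos φ) = Real.sin φ/(c + Real.cos φ) := by
    rw [div_eq_div_iff hden.ne' hX.ne']
    field_simp
  rw [harg, show Real.sin φ / (c + Real.cos φ) = ((c + Real.cos φ)/Real.sin φ)⁻¹ from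
    (inv_div _ _).symm, Real.arctan_inv_of_pos (div_pos hX hsin)]

lemma arctan_id2 {c φ : ℝ} (hc0 : 0 < c) (hc1 : c < 1) (hφ : φ ∈ Set.Ioo 0 Real.pi) :
    Real.pi/2 - Real.arctan ((c + Real.cos φ)/Real.sin φ)
      = φ - Real.arctan (c * Real.sin φ / (1 + c * Real.cos φ)) := by
  set H : ℝ → ℝ := fun ψ => Real.pi/2 - Real.arctan ((c + Real.cos ψ)/Real.sin ψ)
    - (ψ - Real.arctan (c * Real.sin ψ / (1 + c * Real.cos ψ))) with hH
  have hder : ∀ ψ ∈ Set.Ioo 0 Real.pi, HasDerivAt H 0 ψ := by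
    intro ψ hψ
    have hsin := sin_pos_Ioo hψ
    have hcosle := Real.neg_one_le_cos ψ
    have hcosle1 := Real.cos_le_one ψ
    have hM : 0 < 1 + c * Real.cos ψ := by nlinarith
    have hD : 0 < 1 + 2*c*Real.cos ψ + c^2 := by nlinarith
    -- first arctan
    have h1 : HasDerivAt (fun x : ℝ => c + Real.cos x) (-Real.sin ψ) ψ :=
      (Real.hasDerivAt_cos ψ).const_add c
    have h2 := (h1.div (Real.hasDerivAt_sin ψ) hsin.ne').arctan
    have hA : HasDerivAt (fun x => Real.arctan ((c + Real.cos x)/Real.sin x))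
        (-(1 + c*Real.cos ψ)/(1 + 2*c*Real.cos ψ + c^2)) ψ := by
      convert h2 using 1
      · rfl
      simp only [Pi.div_apply]
      have e1 : 1 + ((c + Real.cos ψ)/Real.sin ψ)^2
          = (1 + 2*c*Real.cos ψ + c^2)/Real.sin ψ^2 := by
        field_simp
        linear_combination Real.sin_sq_add_cos_sq ψ
      have e2 : -Real.sin ψ * Real.sin ψ - (c + Real.cos ψ) * Real.cos ψ
          = -(1 + c*Real.cos ψ) := by
        linear_combination -Real.sin_sq_add_cos_sq ψ
      rw [e2, e1]
      field_simp
    -- second arctan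
    have h3 : HasDerivAt (fun x : ℝ => c * Real.sin x) (c * Real.cos ψ) ψ :=
      (Real.hasDerivAt_sin ψ).const_mul c
    have h4 : HasDerivAt (fun x : ℝ => 1 + c * Real.cos x) (c * (-Real.sin ψ)) ψ :=
      ((Real.hasDerivAt_cos ψ).const_mul c).const_add 1
    have h5 := (h3.div h4 hM.ne').arctan
    have hB : HasDerivAt (fun x => Real.arctan (c * Real.sin x / (1 + c * Real.cos x)))
        (c*(c + Real.cos ψ)/(1 + 2*c*Real.cos ψ + c^2)) ψ := by
      convert h5 using 1
      · rfl
      simp only [Pi.div_apply]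
      have e1 : 1 + (c * Real.sin ψ / (1 + c * Real.cos ψ))^2
          = (1 + 2*c*Real.cos ψ + c^2)/(1 + c * Real.cos ψ)^2 := by
        field_simp
        linear_combination c^2 * Real.sin_sq_add_cos_sq ψ
      have e2 : c * Real.cos ψ * (1 + c * Real.cos ψ) - c * Real.sin ψ * (c * -Real.sin ψ)
          = c * (c + Real.cos ψ) := by
        linear_combination c^2 * Real.sin_sq_add_cos_sq ψ
      rw [e2, e1]
      field_simp
    have h6 := ((hasDerivAt_const ψ (Real.pi/2)).sub hA).sub ((hasDerivAt_id ψ).sub hB)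
    refine h6.congr_deriv ?_
    have hD' : 1 + c * Real.cos ψ * 2 + c ^ 2 ≠ 0 := by linarith
    field_simp
    ring
  have hπ2 : Real.pi/2 ∈ Set.Ioo 0 Real.pi := ⟨by positivity, by linarith [Real.pi_pos]⟩
  have hsub : Set.uIcc (Real.pi/2) φ ⊆ Set.Ioo 0 Real.pi :=
    Set.OrdConnected.uIcc_subset Set.ordConnected_Ioo hπ2 hφ
  have hcalc := intervalIntegral.integral_eq_sub_of_hasDerivAt
    (f := H) (f' := fun _ => (0:ℝ)) (a := Real.pi/2) (b := φ)
    (fun ψ hψ => hder ψ (hsub hψ)) (intervalIntegrable_const)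
  simp only [intervalIntegral.integral_const, smul_zero] at hcalc
  have hHval : H (Real.pi/2) = 0 := by
    simp [hH, Real.sin_pi_div_two, Real.cos_pi_div_two]
  have hzero : H φ = 0 := by
    have := hcalc.symm
    rw [hHval, sub_zero] at this
    linarith [this]
  have := hzero
  rw [hH] at this
  simp only [sub_eq_zero] at this
  linarith [this]

lemma phi_eq_two_arctan {φ : ℝ} (hφ : φ ∈ Set.Ioo 0 Real.pi) :
    φ = 2 * Real.arctan (1 * Real.sin φ / (1 + 1 * Real.cos φ)) := by
  have hπ := Real.pi_pos
  have hcos2 : 0 < Real.cos (φ/2) :=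
    Real.cos_pos_of_mem_Ioo ⟨by linarith [hφ.1], by linarith [hφ.2]⟩
  have hs : Real.sin φ = 2 * Real.sin (φ/2) * Real.cos (φ/2) := by
    have := Real.sin_two_mul (φ/2)
    rwa [show 2*(φ/2) = φ by ring] at this
  have hc : Real.cos (φ/2)^2 = 1/2 + Real.cos φ / 2 := by
    have := Real.cos_sq (φ/2)
    rwa [show 2*(φ/2) = φ by ring] at this
  have h2 : 1 * Real.sin φ / (1 + 1 * Real.cos φ) = Real.tan (φ/2) := by
    rw [Real.tan_eq_sin_div_cos, one_mul, one_mul, hs]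
    rw [div_eq_div_iff (by nlinarith : (0:ℝ) < 1 + Real.cos φ).ne' hcos2.ne']
    linear_combination 2 * Real.sin (φ/2) * hc
  rw [h2, Real.arctan_tan (by linarith [hφ.1]) (by linarith [hφ.2])]
  ring


lemma arccos_lt_pi' {v : ℝ} (h : -1 < v) : Real.arccos v < Real.pi := by
  have := Real.neg_pi_div_two_lt_arcsin.2 h
  simp only [Real.arccos]
  linarith

lemma arc_core (θ t : ℝ) (hθ : 0 < θ) (ht : 0 < t) :
    IntegrableOn (fun x => (θ*Real.pi)⁻¹ * (Real.pi/2 - Real.arctan ((x + θ*(t-1))/Real.sqrt (4*θ*t*x - (x + θ*(t-1))^2))) / (θ*(Real.sqrt t+1)^2 - x)) (Set.Ioo (θ*(Real.sqrt t-1)^2) (θ*(Real.sqrt t+1)^2))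
    ∧ ∫ x in Set.Ioo (θ*(Real.sqrt t-1)^2) (θ*(Real.sqrt t+1)^2), (θ*Real.pi)⁻¹ * (Real.pi/2 - Real.arctan ((x + θ*(t-1))/Real.sqrt (4*θ*t*x - (x + θ*(t-1))^2))) / (θ*(Real.sqrt t+1)^2 - x)
      = if 1 ≤ t then θ⁻¹ * Real.log (1 + 1/Real.sqrt t)
        else θ⁻¹ * (2*Real.log 2 - Real.log (1 + Real.sqrt t)) := by
  have hππ := Real.pi_pos
  set c := Real.sqrt t with hcdef
  have hc : 0 < c := Real.sqrt_pos.2 ht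
  have hc2 : c^2 = t := Real.sq_sqrt ht.le
  set A := θ*(c-1)^2 with hAdef
  set B := θ*(c+1)^2 with hBdef
  set F : ℝ → ℝ := fun x => (θ*Real.pi)⁻¹ * (Real.pi/2 - Real.arctan ((x + θ*(t-1))/Real.sqrt (4*θ*t*x - (x + θ*(t-1))^2))) / (B - x) with hFdef
  set g : ℝ → ℝ := fun φ => θ*(1+t) + 2*θ*c * Real.cos φ with hgdef
  have h2θc : (0:ℝ) < 2*θ*c := by positivity
  have hderiv : ∀ φ ∈ Set.Ioo (0:ℝ) Real.pi,
      HasDerivWithinAt g (2*θ*c * (-Real.sin φ)) (Set.Ioo 0 Real.pi) φ := fun φ _ =>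
    (((Real.hasDerivAt_cos φ).const_mul (2*θ*c)).const_add (θ*(1+t))).hasDerivWithinAt
  have hinj : Set.InjOn g (Set.Ioo 0 Real.pi) := by
    intro x hx y hy hxy
    have hcos : Real.cos x = Real.cos y := by
      have h' : 2*θ*c * Real.cos x = 2*θ*c * Real.cos y := by
        simp only [hgdef] at hxy; linarith
      exact mul_left_cancel₀ h2θc.ne' h'
    exact Real.injOn_cos ⟨hx.1.le, hx.2.le⟩ ⟨hy.1.le, hy.2.le⟩ hcos
  have himg : g '' (Set.Ioo 0 Real.pi) = Set.Ioo A B := by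
    apply Set.eq_of_subset_of_subset
    · rintro y ⟨φ, hφ, rfl⟩
      have h1 := neg_one_lt_cos_Ioo hφ
      have h2 := cos_lt_one_Ioo hφ
      constructor
      · simp only [hgdef, hAdef]
        nlinarith [mul_pos h2θc (by linarith : (0:ℝ) < Real.cos φ + 1)]
      · simp only [hgdef, hBdef]
        nlinarith [mul_pos h2θc (by linarith : (0:ℝ) < 1 - Real.cos φ)]
    · intro y hy
      obtain ⟨hy1, hy2⟩ := hy
      set v := (y - θ*(1+t))/(2*θ*c) with hvdef
      have hv1 : -1 < v := by
        rw [hvdef, lt_div_iff₀ h2θc]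
        rw [hAdef] at hy1
        nlinarith
      have hv2 : v < 1 := by
        rw [hvdef, div_lt_iff₀ h2θc]
        rw [hBdef] at hy2
        nlinarith
      refine ⟨Real.arccos v, ⟨Real.arccos_pos.2 hv2, arccos_lt_pi' hv1⟩, ?_⟩
      simp only [hgdef]
      rw [Real.cos_arccos hv1.le hv2.le, hvdef]
      field_simp
      ring
  have hsub := MeasureTheory.integral_image_eq_integral_abs_deriv_smul
    measurableSet_Ioo hderiv hinj F
  have hsubint := MeasureTheory.integrableOn_image_iff_integrableOn_abs_deriv_smul
    measurableSet_Ioo hderiv hinj F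
  rw [himg] at hsub hsubint
  -- pointwise core computation
  have hcore : ∀ φ ∈ Set.Ioo (0:ℝ) Real.pi,
      |2*θ*c * (-Real.sin φ)| • F (g φ)
        = (θ*Real.pi)⁻¹ * (Real.pi/2 - Real.arctan ((c + Real.cos φ)/Real.sin φ))
            * ((1 + Real.cos φ)/Real.sin φ) := by
    intro φ hφ
    have hsin := sin_pos_Ioo hφ
    have hcos1 := cos_lt_one_Ioo hφ
    have habs : |2*θ*c * (-Real.sin φ)| = 2*θ*c*Real.sin φ := by
      rw [abs_of_nonpos (by nlinarith)]
      ring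
    have hA2 : g φ + θ*(t-1) = 2*θ*c*(c + Real.cos φ) := by
      simp only [hgdef]
      linear_combination (-2*θ)*hc2
    have hQ : 4*θ*t*(g φ) - (g φ + θ*(t-1))^2 = (2*θ*c*Real.sin φ)^2 := by
      simp only [hgdef]
      rw [← hc2]
      linear_combination (-4*θ^2*c^2) * Real.sin_sq_add_cos_sq φ
    have hS : Real.sqrt (4*θ*t*(g φ) - (g φ + θ*(t-1))^2) = 2*θ*c*Real.sin φ := by
      rw [hQ, Real.sqrt_sq (by positivity)]
    have hBg : B - g φ = 2*θ*c*(1 - Real.cos φ) := by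
      simp only [hgdef, hBdef]
      linear_combination θ*hc2
    have hsc : Real.sin φ/(1 - Real.cos φ) = (1 + Real.cos φ)/Real.sin φ := by
      rw [div_eq_div_iff (by linarith) hsin.ne']
      linear_combination Real.sin_sq_add_cos_sq φ
    have hFg : F (g φ) = (θ*Real.pi)⁻¹ * (Real.pi/2 - Real.arctan ((c + Real.cos φ)/Real.sin φ))
        / (2*θ*c*(1 - Real.cos φ)) := by
      simp only [hFdef]
      rw [hS, hA2, hBg, mul_div_mul_left _ _ h2θc.ne']
    rw [smul_eq_mul, habs, hFg, ← hsc]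
    have h1mc : (0:ℝ) < 1 - Real.cos φ := by linarith
    field_simp
  rw [MeasureTheory.setIntegral_congr_fun measurableSet_Ioo hcore] at hsub
  by_cases ht1 : 1 ≤ t
  · -- t ≥ 1
    have hc1 : 1 ≤ c := by
      have h' := Real.sqrt_le_sqrt ht1
      rwa [Real.sqrt_one] at h'
    have hr0 : (0:ℝ) ≤ 1/c := by positivity
    have hr1 : 1/c ≤ 1 := by
      rw [div_le_one hc]
      exact hc1
    have hpt : ∀ φ ∈ Set.Ioo (0:ℝ) Real.pi,
        (θ*Real.pi)⁻¹ * (Real.pi/2 - Real.arctan ((c + Real.cos φ)/Real.sin φ))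
            * ((1 + Real.cos φ)/Real.sin φ)
          = (θ*Real.pi)⁻¹ * Kint (1/c) φ := by
      intro φ hφ
      rw [arctan_id1 hc1 hφ]
      unfold Kint
      ring
    rw [MeasureTheory.setIntegral_congr_fun measurableSet_Ioo hpt] at hsub
    have hKI : IntegrableOn (fun φ => (θ*Real.pi)⁻¹ * Kint (1/c) φ) (Set.Ioo 0 Real.pi) :=
      (integrableOn_Kint hr0 hr1).const_mul _
    have hint : IntegrableOn F (Set.Ioo A B) := by
      rw [hsubint]
      apply hKI.congr_fun ?_ measurableSet_Ioo
      intro φ hφ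
      beta_reduce
      rw [← hpt φ hφ, ← hcore φ hφ]
    refine ⟨hint, ?_⟩
    rw [if_pos ht1, hsub, MeasureTheory.integral_const_mul]
    have : ∫ φ in Set.Ioo (0:ℝ) Real.pi, Kint (1/c) φ = Kfun (1/c) := by
      unfold Kfun
      rw [intervalIntegral.integral_of_le Real.pi_pos.le, MeasureTheory.integral_Ioc_eq_integral_Ioo]
    rw [this, Kfun_eq hr0 hr1]
    rw [mul_inv]
    field_simp
  · -- t < 1
    have hc1 : c < 1 := by
      have h' := Real.sqrt_lt_sqrt ht.le (lt_of_not_ge ht1)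
      rwa [Real.sqrt_one] at h'
    have hpt : ∀ φ ∈ Set.Ioo (0:ℝ) Real.pi,
        (θ*Real.pi)⁻¹ * (Real.pi/2 - Real.arctan ((c + Real.cos φ)/Real.sin φ))
            * ((1 + Real.cos φ)/Real.sin φ)
          = (θ*Real.pi)⁻¹ * (2 * Kint 1 φ - Kint c φ) := by
      intro φ hφ
      rw [arctan_id2 hc hc1 hφ]
      have hphi := phi_eq_two_arctan hφ
      unfold Kint
      linear_combination ((θ*Real.pi)⁻¹ * ((1 + Real.cos φ)/Real.sin φ)) * hphi
    rw [MeasureTheory.setIntegral_congr_fun measurableSet_Ioo hpt] at hsub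
    have hKI1 : IntegrableOn (fun φ => 2 * Kint 1 φ) (Set.Ioo 0 Real.pi) :=
      (integrableOn_Kint (by norm_num) (le_refl 1)).const_mul 2
    have hKIc : IntegrableOn (Kint c) (Set.Ioo 0 Real.pi) :=
      integrableOn_Kint hc.le hc1.le
    have hKI : IntegrableOn (fun φ => (θ*Real.pi)⁻¹ * (2 * Kint 1 φ - Kint c φ))
        (Set.Ioo 0 Real.pi) := (hKI1.sub hKIc).const_mul _
    have hint : IntegrableOn F (Set.Ioo A B) := by
      rw [hsubint]
      apply hKI.congr_fun ?_ measurableSet_Ioo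
      intro φ hφ
      beta_reduce
      rw [← hpt φ hφ, ← hcore φ hφ]
    refine ⟨hint, ?_⟩
    rw [if_neg ht1, hsub, MeasureTheory.integral_const_mul]
    rw [MeasureTheory.integral_sub hKI1 hKIc, MeasureTheory.integral_const_mul]
    have e1 : ∫ φ in Set.Ioo (0:ℝ) Real.pi, Kint 1 φ = Kfun 1 := by
      unfold Kfun
      rw [intervalIntegral.integral_of_le Real.pi_pos.le, MeasureTheory.integral_Ioc_eq_integral_Ioo]
    have ec : ∫ φ in Set.Ioo (0:ℝ) Real.pi, Kint c φ = Kfun c := by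
      unfold Kfun
      rw [intervalIntegral.integral_of_le Real.pi_pos.le, MeasureTheory.integral_Ioc_eq_integral_Ioo]
    rw [e1, ec, Kfun_one, Kfun_eq hc.le hc1.le]
    rw [mul_inv]
    field_simp


end AuxK

/-- The equilibrium density `f_t` of the measure `μ^t`, with `arccot` realized as
`π/2 - arctan` (values in `(0, π)`). -/
def eqDensity (θ t : ℝ) (x : ℝ) : ℝ :=
  if θ * (Real.sqrt t - 1) ^ 2 < x ∧ x < θ * (Real.sqrt t + 1) ^ 2 then
    (θ * Real.pi)⁻¹ *
      (Real.pi / 2 -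
        Real.arctan ((x + θ * (t - 1)) / Real.sqrt (4 * θ * t * x - (x + θ * (t - 1)) ^ 2)))
  else if t < 1 ∧ 0 ≤ x ∧ x ≤ θ * (Real.sqrt t - 1) ^ 2 then θ⁻¹
  else 0

section AuxD
open Real
lemma measurable_eqDensity (θ t : ℝ) : Measurable (eqDensity θ t) := by
  unfold eqDensity
  have m1 : Measurable fun x : ℝ => x + θ*(t-1) := measurable_id.add_const _
  have m2 : Measurable fun x : ℝ => Real.sqrt (4*θ*t*x - (x + θ*(t-1))^2) :=
    Real.continuous_sqrt.measurable.comp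
      ((measurable_const.mul measurable_id).sub (m1.pow_const 2))
  refine Measurable.ite ?_
    (measurable_const.mul (measurable_const.sub (Real.measurable_arctan.comp (m1.div m2)))) ?_
  · exact (measurableSet_lt measurable_const measurable_id).inter
      (measurableSet_lt measurable_id measurable_const)
  · refine Measurable.ite ?_ measurable_const measurable_const
    by_cases ht1 : t < 1
    · have he : {x : ℝ | t < 1 ∧ 0 ≤ x ∧ x ≤ θ*(Real.sqrt t - 1)^2}
          = Set.Icc 0 (θ*(Real.sqrt t - 1)^2) := by
        ext x
        simp [ht1, Set.mem_Icc]
      rw [he]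
      exact measurableSet_Icc
    · have he : {x : ℝ | t < 1 ∧ 0 ≤ x ∧ x ≤ θ*(Real.sqrt t - 1)^2} = ∅ := by
        ext x
        simp [ht1]
      rw [he]
      exact MeasurableSet.empty

lemma eqDensity_nonneg (θ t : ℝ) (hθ : 0 < θ) (x : ℝ) : 0 ≤ eqDensity θ t x := by
  have hππ := Real.pi_pos
  unfold eqDensity
  split_ifs with h1 h2
  · apply mul_nonneg (inv_nonneg.2 (by positivity))
    have := Real.arctan_lt_pi_div_two
      ((x + θ*(t-1))/Real.sqrt (4*θ*t*x - (x + θ*(t-1))^2))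
    linarith
  · positivity
  · exact le_refl 0

lemma eqDensity_supp (θ t : ℝ) (hθ : 0 < θ) (ht : 0 < t) {x : ℝ}
    (h : eqDensity θ t x ≠ 0) : x < θ*(Real.sqrt t + 1)^2 := by
  have hc : 0 < Real.sqrt t := Real.sqrt_pos.2 ht
  have hab : θ*(Real.sqrt t - 1)^2 < θ*(Real.sqrt t + 1)^2 := by nlinarith
  unfold eqDensity at h
  split_ifs at h with h1 h2
  · exact h1.2
  · exact lt_of_le_of_lt h2.2.2 hab
  · exact absurd rfl h

lemma integral_density (θ t : ℝ) (hθ : 0 < θ) (ht : 0 < t) :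
    Integrable (fun x => eqDensity θ t x / (θ*(1+Real.sqrt t)^2 - x)) ∧
    ∫ x : ℝ, eqDensity θ t x / (θ*(1+Real.sqrt t)^2 - x)
      = θ⁻¹ * Real.log (1 + 1/Real.sqrt t) := by
  have hππ := Real.pi_pos
  have hc : 0 < Real.sqrt t := Real.sqrt_pos.2 ht
  set c := Real.sqrt t with hcdef
  have hc2 : c^2 = t := Real.sq_sqrt ht.le
  set A := θ*(c-1)^2 with hAdef
  set B := θ*(c+1)^2 with hBdef
  have hBe : θ*(1+c)^2 = B := by rw [hBdef]; ring
  have hA0 : 0 ≤ A := by rw [hAdef]; positivity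
  have hAB : A < B := by
    rw [hAdef, hBdef]
    nlinarith [mul_pos hθ hc]
  have hB0 : 0 < B := lt_of_le_of_lt hA0 hAB
  set G1 : ℝ → ℝ := fun x => (θ*Real.pi)⁻¹ * (Real.pi/2 - Real.arctan ((x + θ*(t-1))/Real.sqrt (4*θ*t*x - (x + θ*(t-1))^2))) / (B - x) with hG1
  set G2 : ℝ → ℝ := fun x => (if t < 1 then θ⁻¹ else 0) / (B - x) with hG2
  have hsplit : (fun x => eqDensity θ t x / (θ*(1+c)^2 - x))
      = fun x => (Set.Ioo A B).indicator G1 x + (Set.Icc 0 A).indicator G2 x := by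
    funext x
    rw [hBe]
    by_cases hx1 : x ∈ Set.Ioo A B
    · rw [Set.indicator_of_mem hx1, Set.indicator_of_notMem
        (show x ∉ Set.Icc 0 A by rintro ⟨_, hle⟩; exact absurd hx1.1 (not_lt.2 hle)), add_zero]
      have he : eqDensity θ t x = (θ*Real.pi)⁻¹ * (Real.pi/2 -
          Real.arctan ((x + θ*(t-1))/Real.sqrt (4*θ*t*x - (x + θ*(t-1))^2))) := by
        unfold eqDensity
        rw [if_pos (show _ ∧ _ from ⟨hx1.1, hx1.2⟩)]
      rw [he]
    · rw [Set.indicator_of_notMem hx1, zero_add]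
      by_cases hx2 : x ∈ Set.Icc 0 A
      · rw [Set.indicator_of_mem hx2]
        by_cases ht1 : t < 1
        · have he : eqDensity θ t x = θ⁻¹ := by
            unfold eqDensity
            rw [if_neg, if_pos (show _ ∧ _ ∧ _ from ⟨ht1, hx2.1, hx2.2⟩)]
            intro hcontra
            exact hx1 ⟨hcontra.1, hcontra.2⟩
          rw [he]
          simp only [hG2, if_pos ht1]
        · have he : eqDensity θ t x = 0 := by
            unfold eqDensity
            rw [if_neg, if_neg]
            · rintro ⟨h', _⟩; exact ht1 h'
            · intro hcontra
              exact hx1 ⟨hcontra.1, hcontra.2⟩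
          rw [he]
          simp only [hG2, if_neg ht1]
      · rw [Set.indicator_of_notMem hx2]
        have he : eqDensity θ t x = 0 := by
          unfold eqDensity
          rw [if_neg, if_neg]
          · rintro ⟨_, h0, hle⟩; exact hx2 ⟨h0, hle⟩
          · intro hcontra
            exact hx1 ⟨hcontra.1, hcontra.2⟩
        rw [he]
        simp
  have harc := arc_core θ t hθ ht
  rw [← hcdef, ← hAdef, ← hBdef] at harc
  have hi1 : IntegrableOn G1 (Set.Ioo A B) := harc.1
  have hval1 : ∫ x in Set.Ioo A B, G1 x
      = if 1 ≤ t then θ⁻¹ * Real.log (1 + 1/c) else θ⁻¹ * (2*Real.log 2 - Real.log (1+c)) :=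
    harc.2
  have hi1' : Integrable ((Set.Ioo A B).indicator G1) :=
    (integrable_indicator_iff measurableSet_Ioo).2 hi1
  have hG2cont : ContinuousOn G2 (Set.Icc 0 A) := by
    apply ContinuousOn.div continuousOn_const (by fun_prop)
    intro x hx
    have hxB : x < B := lt_of_le_of_lt hx.2 hAB
    exact sub_ne_zero.2 (ne_of_gt hxB)
  have hi2 : IntegrableOn G2 (Set.Icc 0 A) := hG2cont.integrableOn_Icc
  have hi2' : Integrable ((Set.Icc 0 A).indicator G2) :=
    (integrable_indicator_iff measurableSet_Icc).2 hi2
  constructor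
  · rw [hsplit]
    exact hi1'.add hi2'
  · rw [hsplit, MeasureTheory.integral_add hi1' hi2',
      MeasureTheory.integral_indicator measurableSet_Ioo,
      MeasureTheory.integral_indicator measurableSet_Icc, hval1]
    by_cases ht1 : t < 1
    · rw [if_neg (not_le.2 ht1)]
      have hc1 : c < 1 := by
        have h' := Real.sqrt_lt_sqrt ht.le ht1
        rwa [Real.sqrt_one] at h'
      have hplat : ∫ x in Set.Icc 0 A, G2 x = θ⁻¹ * (Real.log B - Real.log (B - A)) := by
        simp only [hG2, if_pos ht1]
        rw [MeasureTheory.integral_Icc_eq_integral_Ioc,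
          ← intervalIntegral.integral_of_le hA0]
        simp only [div_eq_mul_inv]
        rw [intervalIntegral.integral_const_mul]
        rw [intervalIntegral.integral_comp_sub_left (fun y : ℝ => y⁻¹) B]
        rw [integral_inv]
        · rw [sub_zero, Real.log_div hB0.ne' (by linarith : B - A ≠ 0)]
        · rw [sub_zero, Set.uIcc_of_le (by linarith)]
          rintro ⟨hh1, _⟩
          linarith
      rw [hplat]
      have hBA : B - A = 4*θ*c := by rw [hBdef, hAdef]; ring
      have hlogB : Real.log B = Real.log θ + 2*Real.log (c+1) := by
        rw [hBdef, Real.log_mul hθ.ne' (by positivity), Real.log_pow]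
        norm_num
      have hlogBA : Real.log (B - A) = 2*Real.log 2 + Real.log θ + Real.log c := by
        rw [hBA, show (4:ℝ)*θ*c = 2^2*(θ*c) by ring,
          Real.log_mul (by norm_num) (by positivity), Real.log_mul hθ.ne' hc.ne',
          Real.log_pow]
        norm_num
        ring
      have hrhs : Real.log (1 + 1/c) = Real.log (c+1) - Real.log c := by
        rw [show 1 + 1/c = (c+1)/c by field_simp, Real.log_div (by positivity) hc.ne']
      have hone : Real.log (1 + c) = Real.log (c + 1) := by rw [add_comm]
      have hkey : (2*Real.log 2 - Real.log (1+c)) + (Real.log B - Real.log (B-A))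
          = Real.log (1 + 1/c) := by
        rw [hlogB, hlogBA, hrhs, hone]
        ring
      linear_combination θ⁻¹ * hkey
    · rw [if_pos (not_lt.1 ht1)]
      have hplat : ∫ x in Set.Icc 0 A, G2 x = 0 := by
        simp only [hG2, if_neg ht1]
        simp
      rw [hplat, add_zero]

end AuxD

/-- The Stieltjes transform of `μ^t` at the right edge:
`lim_{ε→0⁺} G_{μ^t}(b_t + ε) = θ⁻¹ log(1 + t^{-1/2})`, where `b_t = θ(1+√t)²`. -/
theorem stieltjes_transform_at_edge
    (θ t : ℝ) (hθ : 0 < θ) (ht : 0 < t) :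
    Filter.Tendsto
      (fun ε : ℝ => ∫ x : ℝ, eqDensity θ t x / (θ * (1 + Real.sqrt t) ^ 2 + ε - x))
      (nhdsWithin 0 (Set.Ioi 0))
      (nhds (θ⁻¹ * Real.log (1 + 1 / Real.sqrt t))) := by
  obtain ⟨hInt, hVal⟩ := integral_density θ t hθ ht
  rw [← hVal]
  apply MeasureTheory.tendsto_integral_filter_of_dominated_convergence
    (bound := fun x => eqDensity θ t x / (θ*(1+Real.sqrt t)^2 - x))
  · refine Filter.Eventually.of_forall fun ε => ?_
    exact ((measurable_eqDensity θ t).div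
      (measurable_const.sub measurable_id)).aestronglyMeasurable
  · filter_upwards [self_mem_nhdsWithin] with ε hε
    have hε0 : (0:ℝ) < ε := hε
    refine Filter.Eventually.of_forall fun x => ?_
    by_cases h0 : eqDensity θ t x = 0
    · simp [h0]
    · have hxB : x < θ*(1+Real.sqrt t)^2 := by
        rw [show θ*(1+Real.sqrt t)^2 = θ*(Real.sqrt t+1)^2 by ring]
        exact eqDensity_supp θ t hθ ht h0
      have hnn := eqDensity_nonneg θ t hθ x
      have hden1 : 0 < θ*(1+Real.sqrt t)^2 - x := by linarith
      have hden2 : 0 < θ*(1+Real.sqrt t)^2 + ε - x := by linarith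
      rw [Real.norm_eq_abs, abs_of_nonneg (div_nonneg hnn hden2.le)]
      gcongr
      linarith
  · exact hInt
  · have hae : ∀ᵐ x : ℝ, x ≠ θ*(1+Real.sqrt t)^2 := by
      rw [MeasureTheory.ae_iff]
      simp only [ne_eq, not_not, Set.setOf_eq_eq_singleton]
      exact measure_singleton _
    filter_upwards [hae] with x hx
    have hden : θ*(1+Real.sqrt t)^2 - x ≠ 0 := sub_ne_zero.2 (Ne.symm hx)
    have h1 : Tendsto (fun ε : ℝ => θ*(1+Real.sqrt t)^2 + ε - x) (nhdsWithin 0 (Set.Ioi 0))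
        (nhds (θ*(1+Real.sqrt t)^2 - x)) := by
      have hco : Continuous (fun ε : ℝ => θ*(1+Real.sqrt t)^2 + ε - x) := by continuity
      have h2 := (hco.tendsto 0).mono_left (nhdsWithin_le_nhds (s := Set.Ioi (0:ℝ)))
      simpa using h2
    exact tendsto_const_nhds.div h1 hden

end
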